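/- arXiv:1311.3546 — 2 statements merged into one kernel-verified Lean document; each statement's English description precedes it below -/
import Mathlib

section
/- Let (K, δ) be a differential field with field of constants C, and let (M, d_M) and (N, d_N) be finite-dimensional differential modules over (K, δ). Let M^Δ ⊆ Hom_K(M, K) and N^Δ ⊆ Hom_K(N, K) denote the C-vector spaces of horizontal dual vectors, and equip M ⊗_K N with the differential module structure d determined by d(a ⊗ b) = d_M(a) ⊗ b + a ⊗ d_N(b). Then the C-bilinear map M^Δ × N^Δ → (M ⊗_K N)^Δ sending (v, w) to the functional φ(v, w) determined by φ(v, w)(a ⊗ b) = v(a)·w(b) induces an injective C-linear map M^Δ ⊗_C N^Δ → (M ⊗_K N)^Δ. -/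
open TensorProduct

set_option maxHeartbeats 1000000
set_option synthInstance.maxHeartbeats 400000

/-- The field of constants `C = {r ∈ K : δ r = 0}` of a differential field `(K, δ)`. -/
def constants {K : Type*} [Field K] (δ : K → K)
    (hadd : ∀ a b, δ (a + b) = δ a + δ b)
    (hmul : ∀ a b, δ (a * b) = a * δ b + b * δ a) : Subfield K where
  carrier := {r | δ r = 0}
  zero_mem' := by
    have h := hadd 0 0
    rw [add_zero] at h
    exact (left_eq_add.mp h)
  one_mem' := by
    have h := hmul 1 1
    rw [mul_one, one_mul] at h
    exact (left_eq_add.mp h)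
  add_mem' := by
    intro a b ha hb
    simp only [Set.mem_setOf_eq] at *
    rw [hadd, ha, hb, add_zero]
  neg_mem' := by
    intro a ha
    simp only [Set.mem_setOf_eq] at *
    have h0 : δ 0 = 0 := by
      have h := hadd 0 0; rw [add_zero] at h; exact (left_eq_add.mp h)
    have h := hadd a (-a)
    rw [add_neg_cancel, h0, ha, zero_add] at h
    exact h.symm
  mul_mem' := by
    intro a b ha hb
    simp only [Set.mem_setOf_eq] at *
    rw [hmul, ha, hb, mul_zero, mul_zero, add_zero]
  inv_mem' := by
    intro a ha
    simp only [Set.mem_setOf_eq] at *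
    rcases eq_or_ne a 0 with rfl | hne
    · rw [inv_zero]; exact ha
    · have h0 : δ 1 = 0 := by
        have h := hmul 1 1; rw [mul_one, one_mul] at h; exact (left_eq_add.mp h)
      have h := hmul a a⁻¹
      rw [mul_inv_cancel₀ hne, h0, ha, mul_zero, add_zero] at h
      rcases mul_eq_zero.mp h.symm with h' | h'
      · exact absurd h' hne
      · exact h'

/-- The `C`-vector space `M^Δ` of horizontal dual vectors of a differential module
`(M, d)`: those `K`-linear functionals `v : M → K` with `Dv = 0`, i.e.
`δ (v a) = v (d a)` for all `a`. -/
def horizontalDual {K M : Type*} [Field K] [AddCommGroup M] [Module K M]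
    (δ : K → K)
    (hδadd : ∀ a b : K, δ (a + b) = δ a + δ b)
    (hδmul : ∀ a b : K, δ (a * b) = a * δ b + b * δ a)
    (d : M → M) : Submodule (constants δ hδadd hδmul) (M →ₗ[K] K) where
  carrier := {v | ∀ a : M, δ (v a) = v (d a)}
  zero_mem' := by
    intro a
    have h := hδadd 0 0
    rw [add_zero] at h
    simp [left_eq_add.mp h]
  add_mem' := by
    intro v w hv hw a
    simp only [Set.mem_setOf_eq] at *
    rw [LinearMap.add_apply, LinearMap.add_apply, hδadd, hv, hw]
  smul_mem' := by
    intro c v hv a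
    simp only [Set.mem_setOf_eq] at *
    have hc : δ (c : K) = 0 := c.2
    rw [Subring.smul_def, LinearMap.smul_apply, LinearMap.smul_apply,
      smul_eq_mul, smul_eq_mul, hδmul, hc, mul_zero, add_zero, hv]


section Aux

variable {K : Type*} [Field K] (δ : K → K)
    (hδadd : ∀ a b : K, δ (a + b) = δ a + δ b)
    (hδmul : ∀ a b : K, δ (a * b) = a * δ b + b * δ a)

include hδadd in
lemma delta_zero : δ 0 = 0 := by
  have h := hδadd 0 0; rw [add_zero] at h; exact (left_eq_add.mp h)

include hδmul in
lemma delta_one : δ 1 = 0 := by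
  have h := hδmul 1 1; rw [mul_one, one_mul] at h; exact (left_eq_add.mp h)

include hδadd in
lemma delta_sum {ι : Type*} (s : Finset ι) (f : ι → K) :
    δ (∑ i ∈ s, f i) = ∑ i ∈ s, δ (f i) := by
  classical
  induction s using Finset.induction_on with
  | empty => simpa using delta_zero δ hδadd
  | insert _ _ hj ih => rw [Finset.sum_insert hj, Finset.sum_insert hj, hδadd, ih]

/-- Wronskian-type lemma: horizontal dual vectors that are linearly independent over the
constants are linearly independent over `K`. -/
lemma wronskian {N : Type*} [AddCommGroup N] [Module K N] (dN : N → N)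
    {ι : Type*} (w : ι → horizontalDual δ hδadd hδmul dN)
    (hw : LinearIndependent (constants δ hδadd hδmul) w)
    (s : Finset ι) (r : ι → K)
    (hrel : ∑ i ∈ s, r i • ((w i : N →ₗ[K] K)) = 0) : ∀ i ∈ s, r i = 0 := by
  classical
  induction s using Finset.strongInduction generalizing r with
  | _ s ih =>
  by_contra hcon
  push_neg at hcon
  obtain ⟨j, hjs, hrj⟩ := hcon
  set q : ι → K := fun i => (r j)⁻¹ * r i with hq
  have hqrel : ∑ i ∈ s, q i • ((w i : N →ₗ[K] K)) = 0 := by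
    have : ∑ i ∈ s, q i • ((w i : N →ₗ[K] K))
        = (r j)⁻¹ • ∑ i ∈ s, r i • ((w i : N →ₗ[K] K)) := by
      rw [Finset.smul_sum]
      exact Finset.sum_congr rfl fun i _ => by rw [smul_smul]
    rw [this, hrel, smul_zero]
  have hq1 : q j = 1 := inv_mul_cancel₀ hrj
  have hqrel' : ∀ b : N, ∑ i ∈ s, q i * (w i : N →ₗ[K] K) b = 0 := by
    intro b
    have h := LinearMap.congr_fun hqrel b
    simpa using h
  have hder : ∀ b : N, ∑ i ∈ s, δ (q i) * (w i : N →ₗ[K] K) b = 0 := by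
    intro b
    have h2 : δ (∑ i ∈ s, q i * (w i : N →ₗ[K] K) b) = 0 := by
      rw [hqrel' b]; exact delta_zero δ hδadd
    rw [delta_sum δ hδadd] at h2
    have h3 : ∀ i ∈ s, δ (q i * (w i : N →ₗ[K] K) b)
        = q i * (w i : N →ₗ[K] K) (dN b) + δ (q i) * (w i : N →ₗ[K] K) b := by
      intro i _
      rw [hδmul, (w i).2 b, mul_comm ((w i : N →ₗ[K] K) b) (δ (q i))]
    rw [Finset.sum_congr rfl h3, Finset.sum_add_distrib, hqrel' (dN b), zero_add] at h2
    exact h2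
  have hderF : ∑ i ∈ s, δ (q i) • ((w i : N →ₗ[K] K)) = 0 := by
    ext b
    simpa using hder b
  have hqj : δ (q j) = 0 := by rw [hq1]; exact delta_one δ hδmul
  have herase : ∑ i ∈ s.erase j, δ (q i) • ((w i : N →ₗ[K] K)) = 0 := by
    rw [Finset.sum_erase_eq_sub hjs, hderF, hqj, zero_smul, sub_zero]
  have hall : ∀ i ∈ s, δ (q i) = 0 := by
    intro i hi
    rcases eq_or_ne i j with rfl | hne
    · exact hqj
    · exact ih (s.erase j) (Finset.erase_ssubset hjs) _ herase i
        (Finset.mem_erase.mpr ⟨hne, hi⟩)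
  set Q : ι → constants δ hδadd hδmul :=
    fun i => if h : δ (q i) = 0 then ⟨q i, h⟩ else 0 with hQ
  have hQrel : ∑ i ∈ s, Q i • w i = 0 := by
    apply Subtype.ext
    rw [Submodule.coe_sum, ZeroMemClass.coe_zero, ← hqrel]
    refine Finset.sum_congr rfl fun i hi => ?_
    have hv : ((Q i : K)) = q i := by simp only [hQ, dif_pos (hall i hi)]
    rw [SetLike.val_smul, Subring.smul_def, hv]
  have hQj := linearIndependent_iff'ₛ.mp hw s Q 0 (by simpa using hQrel) j hjs
  have hcontra : q j = 0 := by
    have h := congrArg Subtype.val hQj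
    simpa [hQ, hqj] using h
  rw [hq1] at hcontra
  exact one_ne_zero hcontra

/-- The `K`-linear functional on `M ⊗[K] N` given by `a ⊗ b ↦ v a * w b`. -/
noncomputable def pairFun {M N : Type*} [AddCommGroup M] [Module K M]
    [AddCommGroup N] [Module K N] (v : M →ₗ[K] K) (w : N →ₗ[K] K) :
    M ⊗[K] N →ₗ[K] K :=
  TensorProduct.lift ((LinearMap.mul K K ∘ₗ v).compl₂ w)

@[simp] lemma pairFun_tmul {M N : Type*} [AddCommGroup M] [Module K M]
    [AddCommGroup N] [Module K N] (v : M →ₗ[K] K) (w : N →ₗ[K] K) (a : M) (b : N) :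
    pairFun v w (a ⊗ₜ[K] b) = v a * w b := rfl

end Aux

/-- Let `(K, δ)` be a differential field with field of constants `C`, and
let `(M, d_M)` and `(N, d_N)` be finite-dimensional differential modules over `(K, δ)`.
Let `M^Δ ⊆ Hom_K(M, K)` and `N^Δ ⊆ Hom_K(N, K)` denote the `C`-vector spaces of
horizontal dual vectors, and equip `M ⊗[K] N` with the differential module structure `d`
determined by `d (a ⊗ b) = d_M a ⊗ b + a ⊗ d_N b`. Then the `C`-bilinear map
`M^Δ × N^Δ → (M ⊗[K] N)^Δ` sending `(v, w)` to the functional `φ(v, w)` determined by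
`φ(v, w)(a ⊗ b) = v a * w b` induces an injective `C`-linear map
`M^Δ ⊗[C] N^Δ → (M ⊗[K] N)^Δ`. -/
theorem horizontalDual_tensor_map_injective
    {K M N : Type*} [Field K] [CharZero K]
    [AddCommGroup M] [Module K M] [FiniteDimensional K M]
    [AddCommGroup N] [Module K N] [FiniteDimensional K N]
    (δ : K → K)
    (hδadd : ∀ a b : K, δ (a + b) = δ a + δ b)
    (hδmul : ∀ a b : K, δ (a * b) = a * δ b + b * δ a)
    (dM : M → M)
    (hdMadd : ∀ a b : M, dM (a + b) = dM a + dM b)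
    (hdMsmul : ∀ (r : K) (a : M), dM (r • a) = δ r • a + r • dM a)
    (dN : N → N)
    (hdNadd : ∀ a b : N, dN (a + b) = dN a + dN b)
    (hdNsmul : ∀ (r : K) (b : N), dN (r • b) = δ r • b + r • dN b)
    (d : M ⊗[K] N → M ⊗[K] N)
    (hdadd : ∀ s t : M ⊗[K] N, d (s + t) = d s + d t)
    (hdtmul : ∀ (a : M) (b : N), d (a ⊗ₜ[K] b) = dM a ⊗ₜ[K] b + a ⊗ₜ[K] dN b) :
    ∃ Φ : (horizontalDual δ hδadd hδmul dM) ⊗[constants δ hδadd hδmul]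
            (horizontalDual δ hδadd hδmul dN) →ₗ[constants δ hδadd hδmul]
          (horizontalDual δ hδadd hδmul d),
      (∀ (v : horizontalDual δ hδadd hδmul dM) (w : horizontalDual δ hδadd hδmul dN)
         (a : M) (b : N),
        (Φ (v ⊗ₜ w) : M ⊗[K] N →ₗ[K] K) (a ⊗ₜ[K] b) = (v : M →ₗ[K] K) a * (w : N →ₗ[K] K) b) ∧
      Function.Injective Φ := by
  classical
  set C := constants δ hδadd hδmul with hC
  have hd0 : d 0 = 0 := by
    have h := hdadd 0 0; rw [add_zero] at h; exact (left_eq_add.mp h)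
  have hmem : ∀ (v : horizontalDual δ hδadd hδmul dM) (w : horizontalDual δ hδadd hδmul dN),
      (pairFun (v : M →ₗ[K] K) (w : N →ₗ[K] K)) ∈ horizontalDual δ hδadd hδmul d := by
    intro v w t
    induction t using TensorProduct.induction_on with
    | zero => rw [map_zero, hd0, map_zero]; exact delta_zero δ hδadd
    | tmul a b =>
        rw [pairFun_tmul, hdtmul, map_add, pairFun_tmul, pairFun_tmul,
          hδmul, v.2 a, w.2 b]
        ring
    | add t₁ t₂ h₁ h₂ =>
        rw [map_add, hδadd, h₁, h₂, hdadd, map_add]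
  let B : (horizontalDual δ hδadd hδmul dM) →ₗ[C] (horizontalDual δ hδadd hδmul dN) →ₗ[C]
      (horizontalDual δ hδadd hδmul d) :=
    LinearMap.mk₂ C (fun v w => ⟨pairFun (v : M →ₗ[K] K) (w : N →ₗ[K] K), hmem v w⟩)
      (fun v v' w => Subtype.ext (TensorProduct.ext' fun a b => by
        simp [add_mul]))
      (fun c v w => Subtype.ext (TensorProduct.ext' fun a b => by
        simp [Subring.smul_def, mul_assoc]))
      (fun v w w' => Subtype.ext (TensorProduct.ext' fun a b => by
        simp [mul_add]))
      (fun c v w => Subtype.ext (TensorProduct.ext' fun a b => by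
        simp [Subring.smul_def, mul_assoc, mul_left_comm]))
  set Φ := TensorProduct.lift B with hΦdef
  have hΦ : ∀ (v : horizontalDual δ hδadd hδmul dM) (w : horizontalDual δ hδadd hδmul dN)
      (a : M) (b : N),
      (Φ (v ⊗ₜ w) : M ⊗[K] N →ₗ[K] K) (a ⊗ₜ[K] b) = (v : M →ₗ[K] K) a * (w : N →ₗ[K] K) b := by
    intro v w a b
    rw [hΦdef, TensorProduct.lift.tmul]
    rfl
  refine ⟨Φ, hΦ, ?_⟩
  letI : AddCommGroup ((horizontalDual δ hδadd hδmul dM) ⊗[constants δ hδadd hδmul]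
      (horizontalDual δ hδadd hδmul dN)) :=
    TensorProduct.addCommGroup (R := constants δ hδadd hδmul)
      (M := horizontalDual δ hδadd hδmul dM) (N := horizontalDual δ hδadd hδmul dN)
  rw [injective_iff_map_eq_zero]
  intro x hx
  set e := Module.Basis.ofVectorSpace C (horizontalDual δ hδadd hδmul dN) with he
  have hrep : ∃ (s : Finset (Module.Basis.ofVectorSpaceIndex C (horizontalDual δ hδadd hδmul dN)))
      (f : Module.Basis.ofVectorSpaceIndex C (horizontalDual δ hδadd hδmul dN) →
        (horizontalDual δ hδadd hδmul dM)), x = ∑ i ∈ s, f i ⊗ₜ[C] e i := by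
    clear hx
    induction x using TensorProduct.induction_on with
    | zero => exact ⟨∅, fun _ => 0, by simp⟩
    | tmul m n =>
        refine ⟨(e.repr n).support, fun i => e.repr n i • m, ?_⟩
        have hn : ∑ i ∈ (e.repr n).support, e.repr n i • e i = n := by
          conv_rhs => rw [← e.linearCombination_repr n]
          rw [Finsupp.linearCombination_apply, Finsupp.sum]
        conv_lhs => rw [← hn]
        rw [TensorProduct.tmul_sum]
        exact Finset.sum_congr rfl fun i _ => (TensorProduct.smul_tmul _ _ _).symm
    | add y z hy hz =>
        obtain ⟨s, f, rfl⟩ := hy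
        obtain ⟨t, g, rfl⟩ := hz
        refine ⟨s ∪ t, fun i => (if i ∈ s then f i else 0) + (if i ∈ t then g i else 0), ?_⟩
        have key : ∀ (u₁ u₂ : Finset (Module.Basis.ofVectorSpaceIndex C
              (horizontalDual δ hδadd hδmul dN)))
            (h : Module.Basis.ofVectorSpaceIndex C (horizontalDual δ hδadd hδmul dN) →
              (horizontalDual δ hδadd hδmul dM)), u₁ ⊆ u₂ →
            ∑ i ∈ u₂, (if i ∈ u₁ then h i else 0) ⊗ₜ[C] e i = ∑ i ∈ u₁, h i ⊗ₜ[C] e i := by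
          intro u₁ u₂ h hsub
          rw [← Finset.sum_subset hsub
            (fun i _ hi => by rw [if_neg hi, TensorProduct.zero_tmul])]
          exact Finset.sum_congr rfl fun i hi => by rw [if_pos hi]
        rw [Finset.sum_congr rfl
          (fun i (_ : i ∈ s ∪ t) => TensorProduct.add_tmul
            (if i ∈ s then f i else 0) (if i ∈ t then g i else 0) (e i)),
          Finset.sum_add_distrib,
          key s (s ∪ t) f Finset.subset_union_left,
          key t (s ∪ t) g Finset.subset_union_right]
  obtain ⟨s, f, rfl⟩ := hrep
  have key : ∀ a : M, ∀ i ∈ s, (f i : M →ₗ[K] K) a = 0 := by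
    intro a
    apply wronskian δ hδadd hδmul dN (fun i => e i) e.linearIndependent s
      (fun i => (f i : M →ₗ[K] K) a)
    ext b
    have h1 : Φ (∑ i ∈ s, f i ⊗ₜ[C] e i) = 0 := hx
    rw [map_sum] at h1
    have h2 := congrArg
      (fun z : horizontalDual δ hδadd hδmul d => (z : M ⊗[K] N →ₗ[K] K) (a ⊗ₜ[K] b)) h1
    simp only [Submodule.coe_sum, LinearMap.sum_apply, ZeroMemClass.coe_zero,
      LinearMap.zero_apply] at h2
    simp only [LinearMap.sum_apply, LinearMap.smul_apply, smul_eq_mul, LinearMap.zero_apply]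
    rw [← h2]
    exact Finset.sum_congr rfl fun i _ => (hΦ (f i) (e i) a b).symm
  have hf : ∀ i ∈ s, f i = 0 := fun i hi => Subtype.ext (LinearMap.ext fun a => key a i hi)
  calc ∑ i ∈ s, f i ⊗ₜ[C] e i
      = ∑ i ∈ s, (0 : horizontalDual δ hδadd hδmul dM) ⊗ₜ[C] e i :=
        Finset.sum_congr rfl (fun i hi => by rw [hf i hi])
    _ = 0 := by simp
end

section
/- Let (K, δ) be a differential field and let L ⊆ K be a differential subfield (a subfield closed under δ). Let c, d ∈ K be constants (δ(c) = 0 and δ(d) = 0) that are algebraically independent over L. Then there do not exist polynomials P, Q ∈ L[X, Y] such that Q(c, d) ≠ 0, the element a := P(c, d)/Q(c, d) is nonzero, and δ(a) = d·a. -/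
open MvPolynomial


/-- Let `(K, δ)` be a differential field and let `L ⊆ K` be a
differential subfield (a subfield closed under `δ`). Let `c, d ∈ K` be constants
(`δ c = 0` and `δ d = 0`) that are algebraically independent over `L`. Then there do not
exist polynomials `P, Q ∈ L[X, Y]` such that `Q(c, d) ≠ 0`, the element
`a := P(c, d) / Q(c, d)` is nonzero, and `δ a = d * a`. (Polynomials over `L` are
realized as polynomials in `MvPolynomial (Fin 2) K` all of whose coefficients lie
in `L`.) -/
theorem no_rational_logarithmic_antiderivative
    {K : Type*} [Field K] [CharZero K]
    (δ : K → K)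
    (hδadd : ∀ a b : K, δ (a + b) = δ a + δ b)
    (hδmul : ∀ a b : K, δ (a * b) = a * δ b + b * δ a)
    (L : Subfield K) (hL : ∀ x ∈ L, δ x ∈ L)
    (c d : K) (hc : δ c = 0) (hd : δ d = 0)
    (halg : ∀ S : MvPolynomial (Fin 2) K,
      (∀ m : Fin 2 →₀ ℕ, S.coeff m ∈ L) → MvPolynomial.eval ![c, d] S = 0 → S = 0) :
    ¬ ∃ P Q : MvPolynomial (Fin 2) K,
        (∀ m : Fin 2 →₀ ℕ, P.coeff m ∈ L) ∧
        (∀ m : Fin 2 →₀ ℕ, Q.coeff m ∈ L) ∧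
        MvPolynomial.eval ![c, d] Q ≠ 0 ∧
        MvPolynomial.eval ![c, d] P / MvPolynomial.eval ![c, d] Q ≠ 0 ∧
        δ (MvPolynomial.eval ![c, d] P / MvPolynomial.eval ![c, d] Q)
          = d * (MvPolynomial.eval ![c, d] P / MvPolynomial.eval ![c, d] Q) := by
  classical
  rintro ⟨P, Q, hP, hQ, hQ0, ha0, hda⟩
  -- basic facts about δ
  have hδ0 : δ 0 = 0 := by
    have h := hδadd 0 0
    rw [add_zero] at h
    exact left_eq_add.mp h
  have hδsum : ∀ {ι : Type} (s : Finset ι) (f : ι → K),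
      δ (∑ i ∈ s, f i) = ∑ i ∈ s, δ (f i) := by
    intro ι s f
    induction s using Finset.induction with
    | empty => simpa using hδ0
    | insert _ _ hx ih => rw [Finset.sum_insert hx, Finset.sum_insert hx, hδadd, ih]
  have hδprod : ∀ {ι : Type} (s : Finset ι) (f : ι → K),
      (∀ i ∈ s, δ (f i) = 0) → δ (∏ i ∈ s, f i) = 0 := by
    intro ι s f hf
    induction s using Finset.induction with
    | empty => simpa using (by have := hδmul 1 1; simpa using this)
    | insert _ _ hx ih =>
      rename_i a s'
      rw [Finset.prod_insert hx, hδmul, hf a (Finset.mem_insert_self a s'),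
        ih (fun i hi => hf i (Finset.mem_insert_of_mem hi))]
      ring
  -- the coefficientwise derivative
  set D : MvPolynomial (Fin 2) K → MvPolynomial (Fin 2) K :=
    fun S => ∑ m ∈ S.support, monomial m (δ (S.coeff m)) with hD
  have coeff_D : ∀ (S : MvPolynomial (Fin 2) K) m, (D S).coeff m = δ (S.coeff m) := by
    intro S m
    rw [hD]
    simp only [coeff_sum, coeff_monomial]
    rw [Finset.sum_ite_eq' S.support m (fun m' => δ (S.coeff m'))]
    split_ifs with h
    · rfl
    · rw [notMem_support_iff.mp h, hδ0]
  have hvar : ∀ i : Fin 2, δ (![c, d] i) = 0 := by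
    intro i
    fin_cases i <;> simpa
  have hevalD : ∀ S : MvPolynomial (Fin 2) K,
      δ (eval ![c, d] S) = eval ![c, d] (D S) := by
    intro S
    rw [hD]
    simp only [map_sum, eval_monomial]
    rw [eval_eq, hδsum]
    refine Finset.sum_congr rfl fun m _ => ?_
    rw [hδmul]
    rw [hδprod _ _ (fun i _ => by
      have : δ ((![c, d] i) ^ m i) = 0 := by
        induction m i with
        | zero => simpa using (by have := hδmul 1 1; simpa using this)
        | succ n ihn => rw [pow_succ, hδmul, ihn, hvar]; ring
      exact this)]
    rw [Finsupp.prod]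
    ring
  -- evaluations
  set pe := eval ![c, d] P with hpe
  set qe := eval ![c, d] Q with hqe
  have hpe0 : pe ≠ 0 := fun h => ha0 (by rw [h, zero_div])
  -- the differential identity in K
  have h1 : δ pe = (pe / qe) * δ qe + qe * (d * (pe / qe)) := by
    conv_lhs => rw [show pe = (pe / qe) * qe from (div_mul_cancel₀ pe hQ0).symm]
    rw [hδmul, hda]
  have key : qe * δ pe - pe * δ qe - d * (pe * qe) = 0 := by
    rw [h1]
    field_simp
    ring
  -- the polynomial identity
  set R : MvPolynomial (Fin 2) K := Q * D P - P * D Q - X 1 * (P * Q) with hR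
  have hRL : ∀ m : Fin 2 →₀ ℕ, R.coeff m ∈ L := by
    have hmulL : ∀ (A B : MvPolynomial (Fin 2) K),
        (∀ m, A.coeff m ∈ L) → (∀ m, B.coeff m ∈ L) → ∀ m, (A * B).coeff m ∈ L := by
      intro A B hA hB m
      rw [coeff_mul]
      exact Subfield.sum_mem _ fun p _ => mul_mem (hA _) (hB _)
    have hXL : ∀ m : Fin 2 →₀ ℕ, (X (R := K) (1 : Fin 2)).coeff m ∈ L := by
      intro m
      rw [coeff_X']
      split_ifs
      · exact one_mem L
      · exact zero_mem L
    have hDL : ∀ (A : MvPolynomial (Fin 2) K), (∀ m, A.coeff m ∈ L) →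
        ∀ m, (D A).coeff m ∈ L := fun A hA m => by
      rw [coeff_D]; exact hL _ (hA m)
    intro m
    rw [hR]
    simp only [coeff_sub]
    exact sub_mem (sub_mem (hmulL _ _ hQ (hDL _ hP) m) (hmulL _ _ hP (hDL _ hQ) m))
      (hmulL _ _ hXL (hmulL _ _ hP hQ) m)
  have hReval : eval ![c, d] R = 0 := by
    rw [hR]
    simp only [map_sub, map_mul, eval_X]
    rw [← hevalD, ← hevalD, ← hpe, ← hqe]
    have : (![c, d] : Fin 2 → K) 1 = d := rfl
    rw [this]
    linear_combination key
  have hR0 : R = 0 := halg R hRL hReval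
  have hident : X (R := K) (1 : Fin 2) * (P * Q) = Q * D P - P * D Q := by
    have := sub_eq_zero.mp (by rw [← hR]; exact hR0)
    linear_combination -this
  -- nonvanishing
  have hPne : P ≠ 0 := fun h => hpe0 (by rw [hpe, h, map_zero])
  have hQne : Q ≠ 0 := fun h => hQ0 (by rw [hqe, h, map_zero])
  -- move to single-variable polynomials
  set φ : MvPolynomial (Fin 2) K →+* Polynomial (MvPolynomial (Fin 1) K) :=
    (MvPolynomial.finSuccEquiv K 1).toAlgHom.toRingHom.comp
      (MvPolynomial.rename (⇑(Equiv.swap (0 : Fin 2) 1))).toRingHom with hφ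
  have φinj : Function.Injective φ := by
    rw [hφ]
    exact (MvPolynomial.finSuccEquiv K 1).injective.comp
      (MvPolynomial.rename_injective _ (Equiv.swap (0 : Fin 2) 1).injective)
  have hφX : φ (X (1 : Fin 2)) = Polynomial.X := by
    rw [hφ]
    simp only [RingHom.comp_apply, AlgHom.toRingHom_eq_coe, RingHom.coe_coe, rename_X,
      Equiv.swap_apply_right, AlgEquiv.toAlgHom_eq_coe]
    exact finSuccEquiv_X_zero
  have hφdeg : ∀ S : MvPolynomial (Fin 2) K, (φ S).natDegree = degreeOf 1 S := by
    intro S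
    have h2 := natDegree_finSuccEquiv (MvPolynomial.rename (⇑(Equiv.swap (0 : Fin 2) 1)) S)
    have h3 : degreeOf (0 : Fin 2) (MvPolynomial.rename (⇑(Equiv.swap (0 : Fin 2) 1)) S)
        = degreeOf 1 S := by
      have := degreeOf_rename_of_injective
        (p := S) (Equiv.swap (0 : Fin 2) 1).injective 1
      rwa [Equiv.swap_apply_right] at this
    show ((MvPolynomial.finSuccEquiv K 1)
      ((MvPolynomial.rename (⇑(Equiv.swap (0 : Fin 2) 1))) S)).natDegree = degreeOf 1 S
    rw [h2, h3]
  have hDdeg : ∀ S : MvPolynomial (Fin 2) K, degreeOf 1 (D S) ≤ degreeOf 1 S := by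
    intro S
    rw [degreeOf_eq_sup, degreeOf_eq_sup]
    refine Finset.sup_mono fun m hm => ?_
    rw [mem_support_iff] at hm ⊢
    intro h
    rw [coeff_D, h, hδ0] at hm
    exact hm rfl
  -- degree computation
  have hid2 : Polynomial.X * (φ P * φ Q) = φ Q * φ (D P) - φ P * φ (D Q) := by
    have := congrArg φ hident
    rw [map_mul, map_mul, map_sub, map_mul, map_mul, hφX] at this
    exact this
  have hφP : φ P ≠ 0 := fun h => hPne (φinj (by rw [h, map_zero]))
  have hφQ : φ Q ≠ 0 := fun h => hQne (φinj (by rw [h, map_zero]))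
  have hdegL : (Polynomial.X * (φ P * φ Q)).natDegree
      = 1 + ((φ P).natDegree + (φ Q).natDegree) := by
    rw [Polynomial.natDegree_mul Polynomial.X_ne_zero (mul_ne_zero hφP hφQ),
      Polynomial.natDegree_mul hφP hφQ, Polynomial.natDegree_X]
  have hdegR : (φ Q * φ (D P) - φ P * φ (D Q)).natDegree
      ≤ (φ P).natDegree + (φ Q).natDegree := by
    refine (Polynomial.natDegree_sub_le _ _).trans (max_le ?_ ?_)
    · refine (Polynomial.natDegree_mul_le).trans ?_
      rw [hφdeg, hφdeg]
      have := hDdeg P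
      rw [← hφdeg P, ← hφdeg Q] at *
      omega
    · refine (Polynomial.natDegree_mul_le).trans ?_
      rw [hφdeg, hφdeg]
      have := hDdeg Q
      rw [← hφdeg P, ← hφdeg Q] at *
      omega
  rw [← hid2, hdegL] at hdegR
  omega
end
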